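/- Let d ≥ 2 be an integer, let μ > 0, and let ω ∈ ℝ^d with |ω| = √μ. Then for every δ > 0, ∫_{B_δ(ω)} | |η|² − μ |^{-1} dη = ∞, i.e., the zero-temperature BCS kinetic symbol η ↦ | |η|² − μ | has a thick zero set near every point of the sphere of radius √μ. -/

import Mathlib

open MeasureTheory

private lemma BCS_lintegral_inv_mul_Ioo {M l : ℝ} (hM : 0 < M) (hl : 0 < l) :
    ∫⁻ x in Set.Ioo (0:ℝ) l, (ENNReal.ofReal (M * x))⁻¹ = ⊤ := by
  by_contra h
  rw [← Ne, ← lt_top_iff_ne_top] at h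
  have heq : ∫⁻ x in Set.Ioo (0:ℝ) l, (ENNReal.ofReal (M * x))⁻¹
      = ∫⁻ x in Set.Ioo (0:ℝ) l, ENNReal.ofReal ((M * x)⁻¹) :=
    setLIntegral_congr_fun measurableSet_Ioo (fun x hx =>
      (ENNReal.ofReal_inv_of_pos (mul_pos hM hx.1)).symm)
  rw [heq] at h
  have hint : IntegrableOn (fun x : ℝ => (M * x)⁻¹) (Set.Ioo 0 l) := by
    refine ⟨((measurable_const.mul measurable_id).inv).aestronglyMeasurable, ?_⟩
    rw [hasFiniteIntegral_iff_ofReal]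
    · exact h
    · exact (ae_restrict_iff' measurableSet_Ioo).2 (ae_of_all _ fun x hx =>
        (inv_pos.2 (mul_pos hM hx.1)).le)
  have hint2 : IntegrableOn (fun x : ℝ => x ^ (-1 : ℝ)) (Set.Ioo 0 l) := by
    have h2 := hint.const_mul M
    have heq2 : (fun x : ℝ => M * (M * x)⁻¹) =ᵐ[volume.restrict (Set.Ioo 0 l)]
        fun x : ℝ => x ^ (-1 : ℝ) := by
      refine (ae_restrict_iff' measurableSet_Ioo).2 (ae_of_all _ fun x hx => ?_)
      simp only [Real.rpow_neg_one, mul_inv, ← mul_assoc, mul_inv_cancel₀ hM.ne', one_mul]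
    exact (integrable_congr heq2).mp h2
  have := (intervalIntegral.integrableOn_Ioo_rpow_iff hl).mp hint2
  norm_num at this

private lemma BCS_lintegral_inv_mul_abs_Ioo {a b p M : ℝ} (hM : 0 < M)
    (hp : p ∈ Set.Ioo a b) :
    ∫⁻ x in Set.Ioo a b, (ENNReal.ofReal (M * |x - p|))⁻¹ = ⊤ := by
  have h1 : ∫⁻ x in Set.Ioo p b, (ENNReal.ofReal (M * |x - p|))⁻¹ = ⊤ := by
    have hemb : MeasurableEmbedding (fun x : ℝ => x + p) :=
      (Homeomorph.addRight p).measurableEmbedding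
    have hmp : MeasurePreserving (fun x : ℝ => x + p) volume volume :=
      measurePreserving_add_right volume p
    have hpre : (fun x : ℝ => x + p) ⁻¹' Set.Ioo p b = Set.Ioo 0 (b - p) := by
      ext x
      simp only [Set.mem_preimage, Set.mem_Ioo]
      constructor <;> rintro ⟨h1, h2⟩ <;> constructor <;> linarith
    have hkey := hmp.setLIntegral_comp_preimage_emb hemb
      (fun x => (ENNReal.ofReal (M * |x - p|))⁻¹) (Set.Ioo p b)
    rw [hpre] at hkey
    rw [← hkey]
    have heq : ∫⁻ x in Set.Ioo (0:ℝ) (b - p), (ENNReal.ofReal (M * |x + p - p|))⁻¹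
        = ∫⁻ x in Set.Ioo (0:ℝ) (b - p), (ENNReal.ofReal (M * x))⁻¹ :=
      setLIntegral_congr_fun measurableSet_Ioo (fun x hx => by
        rw [add_sub_cancel_right, abs_of_pos hx.1])
    rw [heq]
    exact BCS_lintegral_inv_mul_Ioo hM (by linarith [hp.2])
  exact top_le_iff.mp (h1 ▸ lintegral_mono_set (Set.Ioo_subset_Ioo hp.1.le le_rfl))

set_option maxHeartbeats 2000000 in
private lemma BCS_aux_inner {μ Qy w α R : ℝ} (hα : 0 < α) (hc : 0 < μ - Qy)
    (hrW : abs (Real.sqrt (μ - Qy) - |w|) < α) (hR : Real.sqrt (μ - Qy) ≤ R) :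
    ∫⁻ x in Set.Ioo (w - α) (w + α), (ENNReal.ofReal |x ^ 2 + Qy - μ|)⁻¹ = ⊤ := by
  set r : ℝ := Real.sqrt (μ - Qy) with hrdef
  have hr2 : r ^ 2 = μ - Qy := Real.sq_sqrt hc.le
  have hrpos : 0 < r := Real.sqrt_pos.2 hc
  set W : ℝ := |w| with hWdef
  set p : ℝ := if 0 ≤ w then r else -r with hpdef
  have hp2 : p ^ 2 = r ^ 2 := by
    rw [hpdef]; split <;> ring
  have hp_abs : |p| = r := by
    rw [hpdef]; split <;> simp [abs_of_pos hrpos, abs_of_neg (neg_lt_zero.mpr hrpos)]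
  have hpw : |p - w| < α := by
    rcases le_or_gt 0 w with hsgn | hsgn
    · have hWw : W = w := abs_of_nonneg hsgn
      rw [hpdef, if_pos hsgn, ← hWw]; exact hrW
    · have hWw : W = -w := abs_of_neg hsgn
      rw [hpdef, if_neg (not_le.mpr hsgn)]
      have he : -r - w = -(r - W) := by rw [hWw]; ring
      rw [he, abs_neg]; exact hrW
  have hp_mem : p ∈ Set.Ioo (w - α) (w + α) := by
    have := abs_lt.mp hpw
    exact ⟨by linarith [this.1], by linarith [this.2]⟩
  set M : ℝ := W + α + R + 1 with hMdef
  have hM : 0 < M := by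
    have h1 : 0 ≤ W := abs_nonneg _
    have h2 : 0 ≤ R := le_trans hrpos.le hR
    rw [hMdef]; positivity
  have hbound : ∀ x ∈ Set.Ioo (w - α) (w + α), |x ^ 2 + Qy - μ| ≤ M * |x - p| := by
    intro x hx
    have he : x ^ 2 + Qy - μ = (x - p) * (x + p) := by
      have h0 : (x - p) * (x + p) = x ^ 2 - p ^ 2 := by ring
      rw [h0, hp2, hr2]; ring
    rw [he, abs_mul, mul_comm]
    refine mul_le_mul_of_nonneg_right ?_ (abs_nonneg _)
    have hxb : |x| ≤ W + α := by
      refine abs_le.mpr ⟨?_, ?_⟩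
      · have := neg_abs_le w
        rw [← hWdef] at this
        linarith [hx.1]
      · have := le_abs_self w
        rw [← hWdef] at this
        linarith [hx.2]
    calc |x + p| ≤ |x| + |p| := abs_add_le _ _
      _ ≤ (W + α) + R := by rw [hp_abs]; linarith
      _ ≤ M := by rw [hMdef]; linarith
  refine top_le_iff.mp ?_
  rw [← BCS_lintegral_inv_mul_abs_Ioo hM hp_mem]
  refine lintegral_mono_ae ((ae_restrict_iff' measurableSet_Ioo).2
    (ae_of_all _ fun x hx => ?_))
  rw [ENNReal.inv_le_inv]
  exact ENNReal.ofReal_le_ofReal (hbound x hx)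

set_option maxHeartbeats 4000000 in
/-- The zero-temperature BCS symbol `η ↦ ||η|² − μ|`, `μ > 0`, `d ≥ 2`, has a thick
zero set near every point `ω` of the sphere of radius `√μ`:
`∫_{B_δ(ω)} ||η|² − μ|⁻¹ dη = ∞` for every `δ > 0`. -/
theorem BCS_thick_zero_set
    (d : ℕ) (hd : 2 ≤ d)
    (μ : ℝ) (hμ : 0 < μ)
    (ω : EuclideanSpace ℝ (Fin d)) (hω : ‖ω‖ = Real.sqrt μ) :
    ∀ δ : ℝ, 0 < δ →
      ∫⁻ η in Metric.ball ω δ,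
        (ENNReal.ofReal |‖η‖ ^ 2 - μ|)⁻¹ = ⊤ := by
  intro δ hδ
  obtain ⟨m, rfl⟩ : ∃ m, d = m + 1 := ⟨d - 1, by omega⟩
  have hm : 1 ≤ m := by omega
  have hnormsq : ∀ η : EuclideanSpace ℝ (Fin (m + 1)), ‖η‖ ^ 2 = ∑ k, η k ^ 2 := by
    intro η
    rw [EuclideanSpace.norm_eq, Real.sq_sqrt (by positivity)]
    simp [Real.norm_eq_abs, sq_abs]
  have hsum : ∑ k, ω k ^ 2 = μ := by
    have := hnormsq ω
    rw [hω, Real.sq_sqrt hμ.le] at this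
    linarith
  obtain ⟨i, hi⟩ : ∃ i, ω i ≠ 0 := by
    by_contra hc
    push_neg at hc
    rw [Finset.sum_eq_zero (fun k _ => by rw [hc k]; ring)] at hsum
    linarith
  set w : ℝ := ω i with hwdef
  set b : Fin m → ℝ := fun j => ω (i.succAbove j) with hbdef
  have hsplit : w ^ 2 + ∑ j, b j ^ 2 = μ := by
    rw [← hsum, Fin.sum_univ_succAbove (fun k => ω k ^ 2) i]
  set W : ℝ := |w| with hWdef
  have hW : 0 < W := abs_pos.2 hi
  have hWsq : W ^ 2 = w ^ 2 := sq_abs w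
  have hw2 : 0 < w ^ 2 := hWsq ▸ pow_pos hW 2
  have hbj : ∀ j, |b j| ≤ Real.sqrt μ := by
    intro j
    have h1 : b j ^ 2 ≤ μ := by
      have h2 := Finset.single_le_sum (f := fun j => b j ^ 2)
        (fun j _ => sq_nonneg _) (Finset.mem_univ j)
      nlinarith
    calc |b j| = Real.sqrt (b j ^ 2) := (Real.sqrt_sq_eq_abs _).symm
      _ ≤ Real.sqrt μ := Real.sqrt_le_sqrt h1
  -- constants
  set α : ℝ := min (δ / 2) (W / 2) with hαdef
  have hα : 0 < α := lt_min (by linarith) (by linarith)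
  have hαδ : α ≤ δ / 2 := min_le_left _ _
  have hαW : α ≤ W / 2 := min_le_right _ _
  set K : ℝ := (m : ℝ) * (2 * Real.sqrt μ + 1) with hKdef
  have hm' : (0 : ℝ) < m := by exact_mod_cast Nat.pos_of_ne_zero (by omega)
  have hK : 0 < K := mul_pos hm' (by positivity)
  set β : ℝ := min 1 (min (δ / Real.sqrt (2 * m))
    (min (w ^ 2 / (2 * K)) (α * W / (2 * K)))) with hβdef
  have hβ : 0 < β := by
    refine lt_min one_pos (lt_min (div_pos hδ (Real.sqrt_pos.2 (by positivity)))
      (lt_min (div_pos hw2 (by linarith)) (div_pos (by positivity) (by linarith))))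
  have hβ1 : β ≤ 1 := min_le_left _ _
  have hβ2 : (m : ℝ) * β ^ 2 ≤ δ ^ 2 / 2 := by
    have h1 : β ≤ δ / Real.sqrt (2 * m) := (min_le_right _ _).trans (min_le_left _ _)
    have h2 : β ^ 2 ≤ (δ / Real.sqrt (2 * m)) ^ 2 := pow_le_pow_left₀ hβ.le h1 2
    rw [div_pow, Real.sq_sqrt (by positivity)] at h2
    calc (m : ℝ) * β ^ 2 ≤ (m : ℝ) * (δ ^ 2 / (2 * m)) :=
        mul_le_mul_of_nonneg_left h2 hm'.le
      _ = δ ^ 2 / 2 := by field_simp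
  have hβ3 : β * K ≤ w ^ 2 / 2 := by
    have h1 : β ≤ w ^ 2 / (2 * K) :=
      (min_le_right _ _).trans ((min_le_right _ _).trans (min_le_left _ _))
    calc β * K ≤ (w ^ 2 / (2 * K)) * K := mul_le_mul_of_nonneg_right h1 hK.le
      _ = w ^ 2 / 2 := by field_simp
  have hβ4 : β * K ≤ α * W / 2 := by
    have h1 : β ≤ α * W / (2 * K) :=
      (min_le_right _ _).trans ((min_le_right _ _).trans (min_le_right _ _))
    calc β * K ≤ (α * W / (2 * K)) * K := mul_le_mul_of_nonneg_right h1 hK.le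
      _ = α * W / 2 := by field_simp
  set I : Set ℝ := Set.Ioo (w - α) (w + α) with hIdef
  set Y : Set (Fin m → ℝ) := Metric.ball b β with hYdef
  -- pointwise sum estimate
  have hQ : ∀ y ∈ Y, |(∑ j, y j ^ 2) - ∑ j, b j ^ 2| ≤ β * K := by
    intro y hy
    have hyj : ∀ j, |y j - b j| ≤ β := by
      intro j
      have h1 : dist (y j) (b j) ≤ dist y b := dist_le_pi_dist y b j
      have h2 : dist y b < β := Metric.mem_ball.mp hy
      rw [Real.dist_eq] at h1
      linarith
    calc |(∑ j, y j ^ 2) - ∑ j, b j ^ 2| = |∑ j, (y j ^ 2 - b j ^ 2)| := by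
          rw [Finset.sum_sub_distrib]
      _ ≤ ∑ j, |y j ^ 2 - b j ^ 2| := Finset.abs_sum_le_sum_abs _ _
      _ ≤ ∑ _j : Fin m, β * (2 * Real.sqrt μ + 1) := by
          refine Finset.sum_le_sum fun j _ => ?_
          have h1 := hyj j
          have h2 := hbj j
          have h3 : |y j ^ 2 - b j ^ 2| ≤ |y j - b j| * (|y j - b j| + 2 * |b j|) := by
            have he : y j ^ 2 - b j ^ 2 = (y j - b j) * ((y j - b j) + 2 * b j) := by ring
            rw [he, abs_mul]
            refine mul_le_mul_of_nonneg_left ?_ (abs_nonneg _)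
            calc |(y j - b j) + 2 * b j| ≤ |y j - b j| + |2 * b j| := abs_add_le _ _
              _ = |y j - b j| + 2 * |b j| := by rw [abs_mul, abs_two]
          nlinarith [abs_nonneg (y j - b j), abs_nonneg (b j), Real.sqrt_nonneg μ]
      _ = β * K := by
          rw [Finset.sum_const, Finset.card_univ, Fintype.card_fin, hKdef]
          simp [nsmul_eq_mul]; ring
  -- the inner integral diverges for each y ∈ Y
  have hinner : ∀ y ∈ Y,
      ∫⁻ x in I, (ENNReal.ofReal |x ^ 2 + (∑ j, y j ^ 2) - μ|)⁻¹ = ⊤ := by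
    intro y hy
    have hQy := hQ y hy
    set Qy : ℝ := ∑ j, y j ^ 2 with hQydef
    have hQy0 : 0 ≤ Qy := Finset.sum_nonneg fun j _ => sq_nonneg _
    have habs := abs_le.mp hQy
    have hc : w ^ 2 / 2 ≤ μ - Qy := by
      have h0 : μ - Qy = w ^ 2 + ((∑ j, b j ^ 2) - Qy) := by linarith
      linarith [hβ3, habs.1]
    have hc_pos : 0 < μ - Qy := by linarith
    have hr2 : Real.sqrt (μ - Qy) ^ 2 = μ - Qy := Real.sq_sqrt hc_pos.le
    have hrpos : 0 < Real.sqrt (μ - Qy) := Real.sqrt_pos.2 hc_pos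
    have hR : Real.sqrt (μ - Qy) ≤ Real.sqrt (μ + K) := by
      apply Real.sqrt_le_sqrt
      linarith
    have hrW : abs (Real.sqrt (μ - Qy) - W) < α := by
      set r : ℝ := Real.sqrt (μ - Qy)
      have h1 : |r ^ 2 - W ^ 2| ≤ β * K := by
        rw [hr2, hWsq]
        have he : μ - Qy - w ^ 2 = (∑ j, b j ^ 2) - Qy := by linarith
        rw [he, abs_sub_comm]
        exact hQy
      have h3 : |r - W| * (r + W) = |r ^ 2 - W ^ 2| := by
        rw [← abs_of_pos (show (0:ℝ) < r + W by linarith), ← abs_mul]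
        congr 1
        ring
      have h2 : |r - W| * W ≤ |r - W| * (r + W) :=
        mul_le_mul_of_nonneg_left (by linarith) (abs_nonneg _)
      rw [h3] at h2
      have h4 : |r - W| * W ≤ (α / 2) * W := by linarith
      have h5 : |r - W| ≤ α / 2 := le_of_mul_le_mul_right h4 hW
      linarith
    exact BCS_aux_inner hα hc_pos (hWdef ▸ hrW) hR
  -- the box (in component form) sits inside the ball
  have hsub : ∀ η : EuclideanSpace ℝ (Fin (m + 1)),
      η i ∈ I → (fun j => η (i.succAbove j)) ∈ Y → η ∈ Metric.ball ω δ := by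
    intro η hx hy
    rw [Metric.mem_ball, EuclideanSpace.dist_eq]
    rw [show δ = Real.sqrt (δ ^ 2) from (Real.sqrt_sq hδ.le).symm]
    apply Real.sqrt_lt_sqrt (by positivity)
    have hsplit2 : ∑ k, dist (η k) (ω k) ^ 2
        = dist (η i) (ω i) ^ 2 + ∑ j, dist (η (i.succAbove j)) (ω (i.succAbove j)) ^ 2 :=
      Fin.sum_univ_succAbove (fun k => dist (η k) (ω k) ^ 2) i
    rw [hsplit2]
    have h1 : dist (η i) (ω i) ^ 2 < α ^ 2 := by
      rw [Real.dist_eq]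
      have hxa : |η i - w| < α := abs_lt.mpr ⟨by linarith [hx.1], by linarith [hx.2]⟩
      calc |η i - ω i| ^ 2 = |η i - w| ^ 2 := by rw [← hwdef]
        _ < α ^ 2 := by
          have := pow_lt_pow_left₀ hxa (abs_nonneg (η i - w)) (n := 2) (by norm_num)
          exact this
    have h2 : ∑ j, dist (η (i.succAbove j)) (ω (i.succAbove j)) ^ 2 ≤ (m : ℝ) * β ^ 2 := by
      have hterm : ∀ j : Fin m, dist (η (i.succAbove j)) (ω (i.succAbove j)) ^ 2 ≤ β ^ 2 := by
        intro j
        have hd : dist ((fun j => η (i.succAbove j)) j) (b j)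
            ≤ dist (fun j => η (i.succAbove j)) b :=
          dist_le_pi_dist (X := fun _ : Fin m => ℝ) (fun j => η (i.succAbove j)) b j
        have hd2 : dist (fun j => η (i.succAbove j)) b < β := Metric.mem_ball.mp hy
        have hd3 : dist (η (i.succAbove j)) (ω (i.succAbove j)) ≤ β := by
          simp only [hbdef] at hd
          linarith
        exact pow_le_pow_left₀ dist_nonneg hd3 2
      calc ∑ j, dist (η (i.succAbove j)) (ω (i.succAbove j)) ^ 2
          ≤ ∑ _j : Fin m, β ^ 2 := Finset.sum_le_sum fun j _ => hterm j
        _ = (m : ℝ) * β ^ 2 := by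
            rw [Finset.sum_const, Finset.card_univ, Fintype.card_fin]
            simp [nsmul_eq_mul]
    have hαsq : α ^ 2 ≤ (δ / 2) ^ 2 := pow_le_pow_left₀ hα.le hαδ 2
    have hδ4 : (δ / 2) ^ 2 = δ ^ 2 / 4 := by ring
    have hδsq : 0 < δ ^ 2 := by positivity
    linarith
  -- the measurable equivalence
  set Φ : EuclideanSpace ℝ (Fin (m + 1)) ≃ᵐ ℝ × (Fin m → ℝ) :=
    (MeasurableEquiv.toLp 2 (Fin (m + 1) → ℝ)).symm.trans
      (MeasurableEquiv.piFinSuccAbove (fun _ : Fin (m + 1) => ℝ) i) with hΦdef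
  have hΦmp : MeasurePreserving Φ volume volume := by
    rw [hΦdef, MeasurableEquiv.coe_trans]
    exact (volume_preserving_piFinSuccAbove (fun _ : Fin (m + 1) => ℝ) i).comp
      (EuclideanSpace.volume_preserving_symm_measurableEquiv_toLp (Fin (m + 1)))
  have hΦapp : ∀ η : EuclideanSpace ℝ (Fin (m + 1)),
      Φ η = (η i, fun j => η (i.succAbove j)) := by
    intro η
    rw [hΦdef]
    simp [MeasurableEquiv.trans, MeasurableEquiv.piFinSuccAbove,
      MeasurableEquiv.toLp, Fin.insertNthEquiv, Fin.removeNth]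
    exact ⟨rfl, rfl⟩
  set g : ℝ × (Fin m → ℝ) → ENNReal :=
    fun z => (ENNReal.ofReal |z.1 ^ 2 + (∑ j, z.2 j ^ 2) - μ|)⁻¹ with hgdef
  have hg : Measurable g := by
    have hcont : Continuous fun z : ℝ × (Fin m → ℝ) =>
        |z.1 ^ 2 + (∑ j, z.2 j ^ 2) - μ| := by
      apply Continuous.abs
      apply Continuous.sub _ continuous_const
      exact (continuous_fst.pow 2).add
        (continuous_finset_sum _ fun j _ => ((continuous_apply j).comp continuous_snd).pow 2)
    exact (ENNReal.measurable_ofReal.comp hcont.measurable).inv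
  have hfg : ∀ η : EuclideanSpace ℝ (Fin (m + 1)),
      (ENNReal.ofReal |‖η‖ ^ 2 - μ|)⁻¹ = g (Φ η) := by
    intro η
    rw [hΦapp, hgdef]
    simp only
    rw [hnormsq η, Fin.sum_univ_succAbove (fun k => η k ^ 2) i]
  have hsub' : Φ ⁻¹' (I ×ˢ Y) ⊆ Metric.ball ω δ := by
    intro η hη
    rw [Set.mem_preimage, hΦapp, Set.mem_prod] at hη
    exact hsub η hη.1 hη.2
  refine top_le_iff.mp ?_
  calc (⊤ : ENNReal) = ∫⁻ y in Y, ∫⁻ x in I, g (x, y) := by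
        rw [setLIntegral_congr_fun measurableSet_ball
          (fun y hy => hinner y hy)]
        rw [setLIntegral_const]
        exact (ENNReal.top_mul (Metric.measure_ball_pos volume b hβ).ne').symm
    _ = ∫⁻ z in I ×ˢ Y, g z := by
        rw [show (volume : Measure (ℝ × (Fin m → ℝ))).restrict (I ×ˢ Y)
            = (volume.restrict I).prod (volume.restrict Y) from by
          rw [Measure.volume_eq_prod, Measure.prod_restrict]]
        rw [lintegral_prod_symm' g hg]
    _ = ∫⁻ η in Φ ⁻¹' (I ×ˢ Y), g (Φ η) :=
        (hΦmp.setLIntegral_comp_preimage_emb Φ.measurableEmbedding g _).symm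
    _ = ∫⁻ η in Φ ⁻¹' (I ×ˢ Y), (ENNReal.ofReal |‖η‖ ^ 2 - μ|)⁻¹ :=
        lintegral_congr fun η => (hfg η).symm
    _ ≤ ∫⁻ η in Metric.ball ω δ, (ENNReal.ofReal |‖η‖ ^ 2 - μ|)⁻¹ :=
        lintegral_mono_set hsub'
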